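/- Let k > 0, let L be a real number with 0 < L ≤ π/(2k), and let y ∈ (0, L). Set α_y = − sin(k y)/sin(k (y − L)) and define ψ_y : [0, L] → ℝ by ψ_y(t) = cos(k t) + α_y·cos(k (t − L)). Then y is the unique zero of the derivative ψ_y' in (0, L), and ψ_y attains its strict global maximum over [0, L] at y; that is, ψ_y(x) < ψ_y(y) for every x ∈ [0, L] with x ≠ y. -/

import Mathlib

open Real

/-- with `α_y = - sin (k y) / sin (k (y - L))` and
`ψ_y(t) = cos (k t) + α_y cos (k (t - L))`, the point `y` is the unique zero of `ψ_y'`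
in `(0, L)`, and `ψ_y` attains its strict global maximum over `[0, L]` at `y`. -/
theorem stmt1 (k L y : ℝ) (hk : 0 < k) (hL : 0 < L) (hLk : L ≤ π / (2 * k))
    (hy : y ∈ Set.Ioo 0 L) (αy : ℝ) (ψ : ℝ → ℝ)
    (hα : αy = - Real.sin (k * y) / Real.sin (k * (y - L)))
    (hψ : ∀ t : ℝ, ψ t = Real.cos (k * t) + αy * Real.cos (k * (t - L))) :
    (∀ x ∈ Set.Ioo 0 L, (deriv ψ x = 0 ↔ x = y)) ∧
    (∀ x ∈ Set.Icc 0 L, x ≠ y → ψ x < ψ y) := by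
  obtain ⟨hy0, hyL⟩ := hy
  have hπ := Real.pi_pos
  have hkL : k * L ≤ π / 2 := by
    rw [le_div_iff₀ (by positivity)] at hLk
    nlinarith
  have hky : 0 < k * y := by positivity
  have hkyL : k * y < π / 2 := lt_of_lt_of_le (by nlinarith) hkL
  have hkLy : 0 < k * (L - y) := by nlinarith
  have hkLy2 : k * (L - y) < π / 2 := by nlinarith
  have hsy : 0 < Real.sin (k * y) :=
    Real.sin_pos_of_pos_of_lt_pi hky (by linarith)
  have hsyL : Real.sin (k * (y - L)) < 0 := by
    have : k * (y - L) = -(k * (L - y)) := by ring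
    rw [this, Real.sin_neg, neg_lt_zero]
    exact Real.sin_pos_of_pos_of_lt_pi hkLy (by linarith)
  have hαpos : 0 < αy := by
    rw [hα]
    exact div_pos_of_neg_of_neg (by linarith) hsyL
  have hcancel : Real.sin (k * y) + αy * Real.sin (k * (y - L)) = 0 := by
    rw [hα]; field_simp [hsyL.ne]; ring
  have hC : ψ y = Real.cos (k * y) + αy * Real.cos (k * (y - L)) := hψ y
  have hCpos : 0 < ψ y := by
    rw [hC]
    have h1 : 0 < Real.cos (k * y) := Real.cos_pos_of_mem_Ioo ⟨by linarith, hkyL⟩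
    have h2 : 0 < Real.cos (k * (y - L)) := by
      have : k * (y - L) = -(k * (L - y)) := by ring
      rw [this, Real.cos_neg]
      exact Real.cos_pos_of_mem_Ioo ⟨by linarith, hkLy2⟩
    positivity
  have hId : ∀ t : ℝ, ψ t = ψ y * Real.cos (k * (t - y)) := by
    intro t
    rw [hψ t, hC]
    have e1 : k * t = k * (t - y) + k * y := by ring
    have e2 : k * (t - L) = k * (t - y) + k * (y - L) := by ring
    rw [e1, e2, Real.cos_add, Real.cos_add]
    linarith [mul_eq_zero_of_right (Real.sin (k * (t - y))) hcancel,
      mul_comm (Real.cos (k * (t - y))) (Real.cos (k * y)),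
      (by ring : Real.sin (k * (t-y)) * (Real.sin (k*y) + αy * Real.sin (k*(y-L)))
        = Real.sin (k*(t-y)) * Real.sin (k*y) + αy * (Real.sin (k*(t-y)) * Real.sin (k*(y-L))))]
  have hψfun : ψ = fun t => ψ y * Real.cos (k * (t - y)) := funext hId
  have hderiv : ∀ x : ℝ, deriv ψ x = ψ y * (-Real.sin (k * (x - y)) * k) := by
    intro x
    have h1 : HasDerivAt (fun t : ℝ => k * (t - y)) k x := by
      simpa using ((hasDerivAt_id x).sub_const y).const_mul k
    have h2 : HasDerivAt (fun t : ℝ => Real.cos (k * (t - y)))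
        (-Real.sin (k * (x - y)) * k) x :=
      by have := (Real.hasDerivAt_cos (k * (x - y))).comp x h1; exact this
    have h3 := h2.const_mul (ψ y)
    conv_lhs => rw [hψfun]
    exact h3.deriv
  constructor
  · intro x ⟨hx0, hxL⟩
    rw [hderiv x]
    have hb1 : -π < k * (x - y) := by nlinarith
    have hb2 : k * (x - y) < π := by nlinarith
    constructor
    · intro h
      have hs : Real.sin (k * (x - y)) = 0 := by
        rcases mul_eq_zero.mp h with h' | h'
        · exact absurd h' hCpos.ne'
        · rcases mul_eq_zero.mp h' with h'' | h''
          · linarith [neg_eq_zero.mp h'']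
          · exact absurd h'' hk.ne'
      have := (Real.sin_eq_zero_iff_of_lt_of_lt hb1 hb2).mp hs
      have hxy : x - y = 0 := by
        rcases mul_eq_zero.mp this with h' | h'
        · exact absurd h' hk.ne'
        · exact h'
      linarith
    · rintro rfl
      simp
  · intro x ⟨hx0, hxL⟩ hxy
    rw [hId x]
    have hb : |k * (x - y)| < π := by
      rw [abs_lt]; constructor <;> nlinarith
    have hne : k * (x - y) ≠ 0 := by
      intro h
      rcases mul_eq_zero.mp h with h' | h'
      · exact hk.ne' h'
      · exact hxy (by linarith)
    have hlt : Real.cos (k * (x - y)) < 1 := by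
      have h1 : Real.cos (k * (x - y)) = Real.cos |k * (x - y)| := (Real.cos_abs _).symm
      rw [h1]
      have := Real.cos_lt_cos_of_nonneg_of_le_pi (le_refl 0) hb.le (abs_pos.mpr hne)
      simpa using this
    nlinarith
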